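/- Discrete covariance classification: fix s ∈ ℕ and J ⊆ ℕ. A positive-operator-valued map E on the power set of D_s = {θ_{s,0},...,θ_{s,s}} with values in L(H_J), satisfying E(D_s) = I|_{H_J} and R(θ_{s,k})E({θ_{s,l}})R(θ_{s,k})* = E({θ_{s,k+l mod (s+1)}}), exists with E({θ_{s,l}}) = (s+1)^{-1} R(θ_{s,l}) A R(θ_{s,l})* if and only if A is a bounded positive operator on H_J with ⟨n|A|n⟩ = 1 for all n ∈ J and ⟨n|A|m⟩ = 0 whenever n ≠ m and |n−m| ∈ (s+1)ℤ⁺. -/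

import Mathlib

open scoped Real
open ContinuousLinearMap

/-- The discrete covariant operator family `E({θ_{s,l}}) = (s+1)⁻¹ R(θ_{s,l}) A R(θ_{s,l})*`,
where `θ_{s,l} = 2πl/(s+1)`. -/
noncomputable def discE {H : Type*} [NormedAddCommGroup H] [InnerProductSpace ℂ H]
    [CompleteSpace H] (R : ℝ → (H →L[ℂ] H)) (A : H →L[ℂ] H) (s l : ℕ) : H →L[ℂ] H :=
  (((1 : ℝ) / (s + 1) : ℝ) : ℂ) •
    ((R (2 * π * l / (s + 1))) ∘L A ∘L ContinuousLinearMap.adjoint (R (2 * π * l / (s + 1))))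

/-- Sandwiching by `R x` multiplies matrix elements by a phase. -/
lemma key2 {H : Type*} [NormedAddCommGroup H] [InnerProductSpace ℂ H] [CompleteSpace H]
    (e : HilbertBasis ℕ ℂ H) (R : ℝ → (H →L[ℂ] H))
    (hR : ∀ θ : ℝ, ∀ n : ℕ, R θ (e n) = Complex.exp (Complex.I * n * θ) • e n)
    (hRadj : ∀ θ : ℝ, ContinuousLinearMap.adjoint (R θ) = R (-θ))
    (x : ℝ) (B : H →L[ℂ] H) (n m : ℕ) :
    (inner ℂ (e n) ((R x ∘L B ∘L ContinuousLinearMap.adjoint (R x)) (e m)) : ℂ) =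
      Complex.exp (Complex.I * ((n : ℂ) - m) * x) * (inner ℂ (e n) (B (e m)) : ℂ) := by
  have h2 : R x = ContinuousLinearMap.adjoint (R (-x)) := by rw [hRadj, neg_neg]
  rw [comp_apply, comp_apply, hRadj, hR, map_smul, h2,
    ContinuousLinearMap.adjoint_inner_right, hR, inner_smul_left, inner_smul_right,
    ← Complex.exp_conj]
  rw [← mul_assoc, ← Complex.exp_add]
  congr 2
  simp only [map_mul, Complex.conj_I, Complex.conj_natCast, Complex.conj_ofReal]
  push_cast
  ring

/-- Discrete roots-of-unity sum. -/
lemma sum_exp (s : ℕ) (d : ℤ) :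
    ∑ l : Fin (s + 1), Complex.exp (Complex.I * (d : ℂ) * (2 * (π : ℂ) * (l : ℕ) / ((s : ℂ) + 1)))
      = if ((s : ℤ) + 1) ∣ d then ((s : ℂ) + 1) else 0 := by
  have hs1 : ((s : ℂ) + 1) ≠ 0 := by exact_mod_cast (Nat.cast_add_one_ne_zero s : ((s:ℂ)+1) ≠ 0)
  have hπ : (2 * (π : ℂ) * Complex.I) ≠ 0 := by
    simp [Real.pi_ne_zero, Complex.I_ne_zero, Complex.ofReal_ne_zero]
  set ζ : ℂ := Complex.exp (Complex.I * d * (2 * π / ((s : ℂ) + 1))) with hζ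
  have hpow : ∀ l : Fin (s + 1),
      Complex.exp (Complex.I * (d : ℂ) * (2 * (π : ℂ) * (l : ℕ) / ((s : ℂ) + 1))) = ζ ^ (l : ℕ) := by
    intro l
    rw [hζ, ← Complex.exp_nat_mul]
    congr 1
    ring
  rw [Finset.sum_congr rfl (fun l _ => hpow l)]
  have hone : ζ = 1 ↔ ((s : ℤ) + 1) ∣ d := by
    rw [hζ, Complex.exp_eq_one_iff]
    constructor
    · rintro ⟨k, hk⟩
      refine ⟨k, ?_⟩
      have h4 : (d : ℂ) = ((s : ℂ) + 1) * k := by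
        field_simp at hk
        have := mul_right_cancel₀ hπ (by linear_combination (2 * π * Complex.I) * hk :
          (d : ℂ) * (2 * π * Complex.I) = (((s:ℂ)+1) * k) * (2 * π * Complex.I))
        exact this
      exact_mod_cast h4
    · rintro ⟨k, hk⟩
      refine ⟨k, ?_⟩
      have hd : (d : ℂ) = ((s : ℂ) + 1) * k := by exact_mod_cast hk
      field_simp
      linear_combination hd
  by_cases hdvd : ((s : ℤ) + 1) ∣ d
  · rw [if_pos hdvd]
    have : ζ = 1 := hone.mpr hdvd
    simp [this]
  · rw [if_neg hdvd]
    have hζ1 : ζ ≠ 1 := fun h => hdvd (hone.mp h)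
    have hsum : ∑ l : Fin (s + 1), ζ ^ (l : ℕ) = ∑ i ∈ Finset.range (s + 1), ζ ^ i :=
      Fin.sum_univ_eq_sum_range _ _
    rw [hsum, geom_sum_eq hζ1]
    have : ζ ^ (s + 1) = 1 := by
      rw [hζ, ← Complex.exp_nat_mul]
      have : ((s : ℂ) + 1) * (Complex.I * d * (2 * π / ((s : ℂ) + 1))) = (d : ℤ) * (2 * π * Complex.I) := by
        field_simp
      push_cast at this ⊢
      rw [this]
      exact_mod_cast Complex.exp_int_mul_two_pi_mul_I d
    rw [this]
    simp

/-- Matrix elements of `discE`. -/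
lemma discE_inner {H : Type*} [NormedAddCommGroup H] [InnerProductSpace ℂ H] [CompleteSpace H]
    (e : HilbertBasis ℕ ℂ H) (R : ℝ → (H →L[ℂ] H))
    (hR : ∀ θ : ℝ, ∀ n : ℕ, R θ (e n) = Complex.exp (Complex.I * n * θ) • e n)
    (hRadj : ∀ θ : ℝ, ContinuousLinearMap.adjoint (R θ) = R (-θ))
    (A : H →L[ℂ] H) (s l n m : ℕ) :
    (inner ℂ (e n) (discE R A s l (e m)) : ℂ) =
      (1 / ((s : ℂ) + 1)) *
        (Complex.exp (Complex.I * ((n : ℂ) - m) * (2 * (π : ℂ) * l / ((s : ℂ) + 1))) *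
          (inner ℂ (e n) (A (e m)) : ℂ)) := by
  rw [discE, ContinuousLinearMap.smul_apply, inner_smul_right,
    key2 e R hR hRadj (2 * π * l / (s + 1)) A n m]
  push_cast
  ring

/-- Matrix elements of the total sum. -/
lemma norm_inner {H : Type*} [NormedAddCommGroup H] [InnerProductSpace ℂ H] [CompleteSpace H]
    (e : HilbertBasis ℕ ℂ H) (R : ℝ → (H →L[ℂ] H))
    (hR : ∀ θ : ℝ, ∀ n : ℕ, R θ (e n) = Complex.exp (Complex.I * n * θ) • e n)
    (hRadj : ∀ θ : ℝ, ContinuousLinearMap.adjoint (R θ) = R (-θ))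
    (A : H →L[ℂ] H) (s n m : ℕ) :
    (inner ℂ (e n) ((∑ l : Fin (s + 1), discE R A s (l : ℕ)) (e m)) : ℂ) =
      if ((s : ℤ) + 1) ∣ ((n : ℤ) - (m : ℤ)) then (inner ℂ (e n) (A (e m)) : ℂ) else 0 := by
  have hs1 : ((s : ℂ) + 1) ≠ 0 := by exact_mod_cast (Nat.cast_add_one_ne_zero s : ((s:ℂ)+1) ≠ 0)
  rw [ContinuousLinearMap.sum_apply, inner_sum]
  have hd : ((n : ℂ) - (m : ℂ)) = (((n : ℤ) - (m : ℤ) : ℤ) : ℂ) := by push_cast; ring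
  calc (∑ l : Fin (s + 1), (inner ℂ (e n) (discE R A s (l : ℕ) (e m)) : ℂ))
      = (1 / ((s : ℂ) + 1)) *
        ((∑ l : Fin (s + 1), Complex.exp (Complex.I * (((n : ℤ) - (m : ℤ) : ℤ) : ℂ) *
            (2 * (π : ℂ) * (l : ℕ) / ((s : ℂ) + 1)))) * (inner ℂ (e n) (A (e m)) : ℂ)) := by
        rw [Finset.sum_mul, Finset.mul_sum]
        exact Finset.sum_congr rfl fun l _ => by rw [discE_inner e R hR hRadj, hd]
    _ = _ := by
        rw [sum_exp s ((n : ℤ) - (m : ℤ))]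
        split_ifs with h
        · field_simp
        · simp

/-- Discrete covariance classification: the family `E({θ_{s,l}}) = (s+1)⁻¹ R(θ_{s,l}) A R(θ_{s,l})*`
(`A` a bounded positive operator) is a normalized covariant positive operator measure on
`D_s` over `H_J` if and only if `⟨n|A|n⟩ = 1` for all `n ∈ J` and `⟨n|A|m⟩ = 0` whenever
`n ≠ m`, `n, m ∈ J`, and `|n−m| ∈ (s+1)ℤ⁺`. -/
theorem stmt16 {H : Type*} [NormedAddCommGroup H] [InnerProductSpace ℂ H] [CompleteSpace H]
    (e : HilbertBasis ℕ ℂ H)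
    (R : ℝ → (H →L[ℂ] H))
    (hR : ∀ θ : ℝ, ∀ n : ℕ, R θ (e n) = Complex.exp (Complex.I * n * θ) • e n)
    (hRadj : ∀ θ : ℝ, ContinuousLinearMap.adjoint (R θ) = R (-θ))
    (s : ℕ) (J : Set ℕ) (hJ : J.Nonempty)
    (A : H →L[ℂ] H) (hA : A.IsPositive) :
    -- covariance and normalization of the family `E` over `H_J` …
    ((∀ k l : Fin (s + 1), ∀ n ∈ J, ∀ m ∈ J,
        (inner ℂ (e n) (((R (2 * π * k / (s + 1))) ∘L (discE R A s l) ∘L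
            ContinuousLinearMap.adjoint (R (2 * π * k / (s + 1)))) (e m)) : ℂ) =
        (inner ℂ (e n) ((discE R A s ((k + l : Fin (s + 1)) : ℕ)) (e m)) : ℂ)) ∧
      (∀ n ∈ J, ∀ m ∈ J,
        (inner ℂ (e n) ((∑ l : Fin (s + 1), discE R A s (l : ℕ)) (e m)) : ℂ) =
          if n = m then 1 else 0)) ↔
    -- … holds exactly when `A` has unit diagonal and the required vanishing pattern on `J`
    ((∀ n ∈ J, (inner ℂ (e n) (A (e n)) : ℂ) = 1) ∧
      (∀ n ∈ J, ∀ m ∈ J, n ≠ m → ((s : ℤ) + 1) ∣ ((n : ℤ) - (m : ℤ)) →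
        (inner ℂ (e n) (A (e m)) : ℂ) = 0)) := by
  have hs1 : ((s : ℂ) + 1) ≠ 0 := by exact_mod_cast (Nat.cast_add_one_ne_zero s : ((s:ℂ)+1) ≠ 0)
  constructor
  · rintro ⟨-, hnorm⟩
    constructor
    · intro n hn
      have h := hnorm n hn n hn
      rw [norm_inner e R hR hRadj] at h
      simpa using h
    · intro n hn m hm hne hdvd
      have h := hnorm n hn m hm
      rw [norm_inner e R hR hRadj, if_pos hdvd, if_neg hne] at h
      exact h
  · rintro ⟨hdiag, hoff⟩
    constructor
    · -- covariance: holds for any A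
      intro k l n hn m hm
      rw [key2 e R hR hRadj _ (discE R A s l) n m,
        discE_inner e R hR hRadj, discE_inner e R hR hRadj]
      set r : ℕ := ((k + l : Fin (s + 1)) : ℕ) with hrdef
      set q : ℕ := ((k : ℕ) + (l : ℕ)) / (s + 1) with hqdef
      have hr : (s + 1) * q + r = (k : ℕ) + (l : ℕ) := by
        rw [hrdef, hqdef, Fin.val_add]
        exact Nat.div_add_mod _ _
      have hC : ((s : ℂ) + 1) * q + r = (k : ℂ) + (l : ℂ) := by exact_mod_cast hr
      have hexp : Complex.exp (Complex.I * ((n : ℂ) - m) * ((2 * π * k / (s + 1) : ℝ) : ℂ)) *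
          Complex.exp (Complex.I * ((n : ℂ) - m) * (2 * (π : ℂ) * (l : ℕ) / ((s : ℂ) + 1))) =
          Complex.exp (Complex.I * ((n : ℂ) - m) * (2 * (π : ℂ) * r / ((s : ℂ) + 1))) := by
        rw [← Complex.exp_add]
        rw [show Complex.I * ((n : ℂ) - m) * ((2 * π * k / (s + 1) : ℝ) : ℂ) +
            Complex.I * ((n : ℂ) - m) * (2 * (π : ℂ) * (l : ℕ) / ((s : ℂ) + 1)) =
            Complex.I * ((n : ℂ) - m) * (2 * (π : ℂ) * r / ((s : ℂ) + 1)) +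
            ((((n : ℤ) - m) * q : ℤ) : ℂ) * (2 * π * Complex.I) by
          push_cast
          field_simp
          linear_combination (-((n : ℂ) - m)) * hC]
        rw [Complex.exp_add, Complex.exp_int_mul_two_pi_mul_I, mul_one]
      linear_combination ((1 / ((s : ℂ) + 1)) * (inner ℂ (e n) (A (e m)) : ℂ)) * hexp
    · intro n hn m hm
      rw [norm_inner e R hR hRadj]
      by_cases hnm : n = m
      · subst hnm
        rw [if_pos (show ((s : ℤ) + 1) ∣ ((n : ℤ) - (n : ℤ)) by simp), if_pos rfl]
        exact hdiag n hn
      · rw [if_neg hnm]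
        by_cases hdvd : ((s : ℤ) + 1) ∣ ((n : ℤ) - (m : ℤ))
        · rw [if_pos hdvd]
          exact hoff n hn m hm hnm hdvd
        · rw [if_neg hdvd]
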